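/- With a = i(x²−y²) and b = −y(y²/3 − x² − 1) − i(x(1 + y² − x²/3) + C − t), the polynomial |a|² + |b|² in (x,y) vanishes at some point (x,y) ∈ ℝ² if and only if t = C. -/

import Mathlib

open Complex

/-- a = i(x²−y²) -/
noncomputable def aMNV (x y : ℝ) : ℂ := Complex.I * ((x^2 - y^2 : ℝ) : ℂ)

/-- b = −y(y²/3 − x² − 1) − i(x(1 + y² − x²/3) + C − t) -/
noncomputable def bMNV (C t x y : ℝ) : ℂ :=
  ((-y*(y^2/3 - x^2 - 1) : ℝ) : ℂ) - Complex.I * ((x*(1 + y^2 - x^2/3) + C - t : ℝ) : ℂ)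

theorem mnv_denominator_vanishes_iff (C t : ℝ) :
    (∃ x y : ℝ, (‖aMNV x y‖)^2 + (‖bMNV C t x y‖)^2 = 0) ↔ t = C := by
  constructor
  · rintro ⟨x, y, h⟩
    have h1 : ‖aMNV x y‖ = 0 := by
      nlinarith [norm_nonneg (aMNV x y), norm_nonneg (bMNV C t x y),
        sq_nonneg (‖aMNV x y‖), sq_nonneg (‖bMNV C t x y‖)]
    have h2 : ‖bMNV C t x y‖ = 0 := by
      nlinarith [norm_nonneg (aMNV x y), norm_nonneg (bMNV C t x y),
        sq_nonneg (‖aMNV x y‖), sq_nonneg (‖bMNV C t x y‖)]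
    have ha : aMNV x y = 0 := norm_eq_zero.mp h1
    have hb : bMNV C t x y = 0 := norm_eq_zero.mp h2
    simp [aMNV, bMNV, Complex.ext_iff, -Complex.ofReal_pow] at ha hb
    obtain ⟨hbr, hbi⟩ := hb
    have hy : y = 0 := by
      rcases hbr with h' | h'
      · exact h'
      · nlinarith [sq_nonneg y]
    have hx : x = 0 := by nlinarith [sq_nonneg x]
    subst hx; subst hy
    linarith
  · rintro rfl
    exact ⟨0, 0, by simp [aMNV, bMNV]⟩
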